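/- In a weighted potential game where each player's strategy set Ω_i is convex, each player's cost b_i(·, Θ_{-i}) is convex, and the potential P is convex and continuously differentiable on Ω = ∏_i Ω_i, every Nash equilibrium of the game is a global minimizer of P over Ω. -/

import Mathlib

open Filter Topology
open Set

lemma slope_tendsto' {E : Type*} [NormedAddCommGroup E] [NormedSpace ℝ E]
    (P : E → ℝ) (D : E →L[ℝ] ℝ) (x u : E) (hD : HasFDerivAt P D x) :
    Tendsto (fun t : ℝ => (P (x + t • u) - P x) / t) (𝓝[>] (0:ℝ)) (𝓝 (D u)) := by
  have hL : HasDerivAt (fun t : ℝ => x + t • u) u 0 := by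
    simpa using ((hasDerivAt_id (0:ℝ)).smul_const u).const_add x
  have hg : HasDerivAt (fun t : ℝ => P (x + t • u)) (D u) 0 := by
    have := (show HasFDerivAt P D ((fun t : ℝ => x + t • u) 0) by simpa using hD).comp_hasDerivAt 0 hL
    exact this
  have h1 := hasDerivAt_iff_tendsto_slope.mp hg
  have h2 : Tendsto (slope (fun t : ℝ => P (x + t • u)) 0) (𝓝[>] 0) (𝓝 (D u)) :=
    h1.mono_left (nhdsWithin_mono _ (fun t ht => ne_of_gt ht))
  refine h2.congr (fun t => ?_)
  simp [slope_def_field, div_eq_inv_mul, mul_comm]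

/-- In a weighted potential game with convex strategy sets, convex individual costs and a
convex continuously differentiable potential, every Nash equilibrium is a global minimizer
of the potential over the joint strategy set. -/
theorem stmt7 {ι : Type} [Fintype ι] [DecidableEq ι] (n : ι → ℕ)
    (Ω : ∀ i, Set (EuclideanSpace ℝ (Fin (n i))))
    (b : ι → (∀ i, EuclideanSpace ℝ (Fin (n i))) → ℝ)
    (ω : ι → ℝ) (hω : ∀ i, 0 < ω i)
    (P : (∀ i, EuclideanSpace ℝ (Fin (n i))) → ℝ)
    (hpot : ∀ (i : ι) (Θ : ∀ j, EuclideanSpace ℝ (Fin (n j))) (θ' : EuclideanSpace ℝ (Fin (n i))),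
      b i (Function.update Θ i θ') - b i Θ =
        ω i * (P (Function.update Θ i θ') - P Θ))
    (hΩconv : ∀ i, Convex ℝ (Ω i))
    (hbconv : ∀ i Θ, ConvexOn ℝ (Ω i) (fun θ => b i (Function.update Θ i θ)))
    (hPconv : ConvexOn ℝ (Set.pi Set.univ Ω) P)
    (hPdiff : ContDiff ℝ 1 P)
    (Θstar : ∀ i, EuclideanSpace ℝ (Fin (n i)))
    (hΘ : Θstar ∈ Set.pi Set.univ Ω)
    (hNE : ∀ i, ∀ θ ∈ Ω i, b i Θstar ≤ b i (Function.update Θstar i θ)) :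
    ∀ Θ ∈ Set.pi Set.univ Ω, P Θstar ≤ P Θ := by
  intro Θ hΘ'
  have hdiffP : Differentiable ℝ P := hPdiff.differentiable one_ne_zero
  set D := fderiv ℝ P Θstar with hDdef
  have hD : HasFDerivAt P D Θstar := (hdiffP Θstar).hasFDerivAt
  -- P is coordinate-wise minimized at Θstar
  have hcoord : ∀ i, ∀ θ ∈ Ω i, P Θstar ≤ P (Function.update Θstar i θ) := by
    intro i θ hθ
    have h1 := hNE i θ hθ
    have h2 := hpot i Θstar θ
    nlinarith [hω i]
  -- Step A: each coordinate direction has nonnegative derivative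
  have stepA : ∀ i, 0 ≤ D (Pi.single i (Θ i - Θstar i)) := by
    intro i
    set u : ∀ j, EuclideanSpace ℝ (Fin (n j)) := Pi.single i (Θ i - Θstar i) with hu
    have key : ∀ t : ℝ, t ∈ Set.Icc (0:ℝ) 1 → P Θstar ≤ P (Θstar + t • u) := by
      intro t ht
      have hmem : Θstar i + t • (Θ i - Θstar i) ∈ Ω i := by
        have := hΩconv i (hΘ i trivial) (hΘ' i trivial)
          (by linarith [ht.2] : (0:ℝ) ≤ 1 - t) ht.1 (by ring)
        convert this using 1
        rw [smul_sub, sub_smul, one_smul]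
        abel
      have hupd : Θstar + t • u = Function.update Θstar i (Θstar i + t • (Θ i - Θstar i)) := by
        funext j
        by_cases hj : j = i
        · subst hj; simp [hu]
        · simp [hu, Function.update_of_ne hj, Pi.single_eq_of_ne hj]
      rw [hupd]
      exact hcoord i _ hmem
    have htend := slope_tendsto' P D Θstar u hD
    refine ge_of_tendsto htend ?_
    filter_upwards [Ioc_mem_nhdsGT_of_mem (Set.left_mem_Ico.mpr one_pos)] with t ht
    exact div_nonneg (by linarith [key t ⟨le_of_lt ht.1, ht.2⟩]) (le_of_lt ht.1)
  -- Step B: sum up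
  have hsum : ∑ i, Pi.single i (Θ i - Θstar i) = Θ - Θstar := by
    funext j
    simp [Finset.sum_apply, Pi.single_apply]
  have hDv : 0 ≤ D (Θ - Θstar) := by
    rw [← hsum, map_sum]
    exact Finset.sum_nonneg fun i _ => stepA i
  -- Step C: convexity gives P Θ - P Θstar ≥ D (Θ - Θstar)
  have hslope : D (Θ - Θstar) ≤ P Θ - P Θstar := by
    have htend := slope_tendsto' P D Θstar (Θ - Θstar) hD
    refine le_of_tendsto htend ?_
    filter_upwards [Ioc_mem_nhdsGT_of_mem (Set.left_mem_Ico.mpr one_pos)] with t ht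
    have hcv := hPconv.2 hΘ hΘ' (by linarith [ht.2] : (0:ℝ) ≤ 1 - t) (le_of_lt ht.1) (by ring)
    have hpt : (1 - t) • Θstar + t • Θ = Θstar + t • (Θ - Θstar) := by
      rw [smul_sub, sub_smul, one_smul]
      abel
    rw [hpt] at hcv
    rw [div_le_iff₀ ht.1]
    simp only [smul_eq_mul] at hcv
    nlinarith
  linarith
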